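/- Let k ≥ 3 be an integer, let v ∈ ℝ, and let f₁, …, f_k : [0,∞) → ℝ be bounded continuous functions with f₁(0) = ⋯ = f_k(0) = v. Then lim_{h→0⁺} Σ_{l=1}^{k} ∫₀^∞ [ φ_N(y) / (1 + (k−2)·Φ_N(−y)) ] · f_l(h·y) dy = v · (k/(k−2)) · log(k/2). -/

import Mathlib

open scoped Real

/-- The standard normal probability density `φ_N(y) = (2π)^{-1/2} e^{-y²/2}`. -/
noncomputable def stdNormalPDF (y : ℝ) : ℝ :=
  (Real.sqrt (2 * π))⁻¹ * Real.exp (-(y ^ 2) / 2)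

/-- The standard normal cumulative distribution function
`Φ_N(t) = ∫_{-∞}^t φ_N(y) dy`. -/
noncomputable def stdNormalCDF (t : ℝ) : ℝ :=
  ∫ y in Set.Iic t, stdNormalPDF y

open MeasureTheory Set Filter Topology

lemma pdf_eq' (y : ℝ) :
    stdNormalPDF y = (Real.sqrt (2 * π))⁻¹ * Real.exp (-(1/2 : ℝ) * y ^ 2) := by
  unfold stdNormalPDF; ring_nf

lemma pdf_pos (y : ℝ) : 0 < stdNormalPDF y := by
  apply mul_pos _ (Real.exp_pos _)
  rw [inv_pos]
  exact Real.sqrt_pos.2 (by positivity)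

lemma pdf_even (y : ℝ) : stdNormalPDF (-y) = stdNormalPDF y := by
  unfold stdNormalPDF; rw [neg_pow]; ring_nf

lemma pdf_cont : Continuous stdNormalPDF := by
  unfold stdNormalPDF
  continuity

lemma pdf_integrable : Integrable stdNormalPDF := by
  have h := (integrable_exp_neg_mul_sq (by norm_num : (0:ℝ) < 1/2)).const_mul
    (Real.sqrt (2 * π))⁻¹
  exact h.congr (by filter_upwards with y using (pdf_eq' y).symm)

lemma pdf_integral : ∫ y, stdNormalPDF y = 1 := by
  simp_rw [pdf_eq', MeasureTheory.integral_const_mul, integral_gaussian]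
  rw [show π / (1/2 : ℝ) = 2 * π by ring]
  rw [inv_mul_cancel₀]
  exact ne_of_gt (Real.sqrt_pos.2 (by positivity))

lemma cdf_nonneg (t : ℝ) : 0 ≤ stdNormalCDF t :=
  MeasureTheory.setIntegral_nonneg measurableSet_Iic fun y _ => (pdf_pos y).le

lemma cdf_zero : stdNormalCDF 0 = 1 / 2 := by
  have h1 : stdNormalCDF 0 + ∫ y in Ioi (0:ℝ), stdNormalPDF y = 1 := by
    rw [stdNormalCDF, intervalIntegral.integral_Iic_add_Ioi
      pdf_integrable.integrableOn pdf_integrable.integrableOn, pdf_integral]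
  have h2 : stdNormalCDF 0 = ∫ y in Ioi (0:ℝ), stdNormalPDF y := by
    rw [stdNormalCDF]
    have h := integral_comp_neg_Iic (0:ℝ) stdNormalPDF
    simp_rw [pdf_even] at h
    simpa using h
  linarith
  -- cdf_zero

lemma cdf_hasDerivAt (t : ℝ) : HasDerivAt stdNormalCDF (stdNormalPDF t) t := by
  have heq : stdNormalCDF = fun u => stdNormalCDF 0 + ∫ y in (0:ℝ)..u, stdNormalPDF y := by
    funext u
    rw [eq_comm, add_comm]
    rw [← intervalIntegral.integral_Iic_sub_Iic pdf_integrable.integrableOn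
      pdf_integrable.integrableOn]
    show stdNormalCDF u - stdNormalCDF 0 + stdNormalCDF 0 = stdNormalCDF u
    ring
  rw [heq]
  exact (intervalIntegral.integral_hasDerivAt_right
    pdf_integrable.intervalIntegrable
    pdf_cont.aestronglyMeasurable.stronglyMeasurableAtFilter
    pdf_cont.continuousAt).const_add _

lemma cdf_tendsto_atBot : Tendsto stdNormalCDF atBot (nhds 0) := by
  have heq : stdNormalCDF = fun t => ∫ y, (Iic t).indicator stdNormalPDF y := by
    funext t
    rw [stdNormalCDF, MeasureTheory.integral_indicator measurableSet_Iic]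
  rw [heq]
  have h0 : (0 : ℝ) = ∫ y : ℝ, (0 : ℝ) := by simp
  rw [h0]
  apply MeasureTheory.tendsto_integral_filter_of_dominated_convergence stdNormalPDF
  · filter_upwards with t
    exact (pdf_cont.aestronglyMeasurable).indicator measurableSet_Iic
  · filter_upwards with t
    filter_upwards with y
    rw [Set.indicator_apply]
    split_ifs
    · rw [Real.norm_eq_abs, abs_of_pos (pdf_pos y)]
    · simp [(pdf_pos y).le]
  · exact pdf_integrable
  · filter_upwards with y
    have : ∀ᶠ t in atBot, (Iic t).indicator stdNormalPDF y = 0 := by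
      filter_upwards [eventually_lt_atBot y] with t ht
      exact Set.indicator_of_notMem (by simpa using ht) _
    exact Tendsto.congr' (by filter_upwards [this] with t ht using ht.symm) tendsto_const_nhds

lemma cdf_neg_hasDerivAt (y : ℝ) :
    HasDerivAt (fun y => stdNormalCDF (-y)) (-stdNormalPDF y) y := by
  have h := (cdf_hasDerivAt (-y)).comp y (hasDerivAt_neg y)
  simpa [pdf_even, Function.comp_def] using h

lemma cdf_neg_tendsto : Tendsto (fun y => stdNormalCDF (-y)) atTop (nhds 0) :=
  cdf_tendsto_atBot.comp tendsto_neg_atTop_atBot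

/-- Denominator is at least 1. -/
lemma denom_ge_one {c : ℝ} (hc : 0 ≤ c) (y : ℝ) :
    1 ≤ 1 + c * stdNormalCDF (-y) := by
  nlinarith [cdf_nonneg (-y)]

/-- The key improper integral computation. -/
lemma key_integral {c : ℝ} (hc : 1 ≤ c) :
    ∫ y in Ioi (0:ℝ), stdNormalPDF y / (1 + c * stdNormalCDF (-y))
      = c⁻¹ * Real.log (1 + c / 2) := by
  have hc0 : (0:ℝ) < c := lt_of_lt_of_le one_pos hc
  set G : ℝ → ℝ := fun y => -(c⁻¹ * Real.log (1 + c * stdNormalCDF (-y))) with hG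
  have hD : ∀ y : ℝ, 1 + c * stdNormalCDF (-y) ≠ 0 := fun y =>
    ne_of_gt (lt_of_lt_of_le one_pos (denom_ge_one hc0.le y))
  have hderiv : ∀ y : ℝ,
      HasDerivAt G (stdNormalPDF y / (1 + c * stdNormalCDF (-y))) y := by
    intro y
    have h1 : HasDerivAt (fun y => 1 + c * stdNormalCDF (-y)) (c * -stdNormalPDF y) y :=
      ((cdf_neg_hasDerivAt y).const_mul c).const_add 1
    have h2 := (h1.log (hD y)).const_mul c⁻¹
    have h3 := h2.neg
    have h4 : -(c⁻¹ * (c * -stdNormalPDF y / (1 + c * stdNormalCDF (-y))))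
        = stdNormalPDF y / (1 + c * stdNormalCDF (-y)) := by
      rw [mul_div_assoc, ← mul_assoc, inv_mul_cancel₀ (ne_of_gt hc0), one_mul, neg_div, neg_neg]
    exact h4 ▸ h3
  have hcontG : Continuous G :=
    continuous_iff_continuousAt.2 fun y => (hderiv y).continuousAt
  have hint : IntegrableOn (fun y => stdNormalPDF y / (1 + c * stdNormalCDF (-y)))
      (Ioi (0:ℝ)) := by
    apply (pdf_integrable.restrict (s := Ioi 0)).mono
    · apply ContinuousOn.aestronglyMeasurable _ measurableSet_Ioi
      apply ContinuousOn.div pdf_cont.continuousOn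
      · exact (continuous_const.add (continuous_const.mul
          (continuous_iff_continuousAt.2 fun y =>
            (cdf_neg_hasDerivAt y).continuousAt))).continuousOn
      · exact fun y _ => hD y
    · filter_upwards with y
      rw [Real.norm_eq_abs, Real.norm_eq_abs, abs_of_pos (pdf_pos y),
        abs_of_pos (div_pos (pdf_pos y) (lt_of_lt_of_le one_pos (denom_ge_one hc0.le y)))]
      exact div_le_self (pdf_pos y).le (denom_ge_one hc0.le y)
  have htend : Tendsto G atTop (nhds 0) := by
    have h1 : Tendsto (fun y => 1 + c * stdNormalCDF (-y)) atTop (nhds 1) := by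
      have := (cdf_neg_tendsto.const_mul c).const_add 1
      simpa using this
    have h2 : Tendsto (fun y => Real.log (1 + c * stdNormalCDF (-y))) atTop (nhds 0) := by
      have := (Real.continuousAt_log (by norm_num : (1:ℝ) ≠ 0)).tendsto.comp h1
      simpa [Function.comp_def] using this
    have := (h2.const_mul c⁻¹).neg
    simpa using this
  have := MeasureTheory.integral_Ioi_of_hasDerivAt_of_tendsto
    (f := G) (a := 0) hcontG.continuousWithinAt (fun x _ => hderiv x) hint htend
  rw [this, hG]
  simp only [neg_zero, zero_sub, neg_neg, cdf_zero]
  ring_nf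

/-- Per-leg convergence. -/
lemma leg_tendsto {c : ℝ} (hc : 1 ≤ c) (v : ℝ) (g : ℝ → ℝ)
    (hcont : ContinuousOn g (Set.Ici 0))
    (hbdd : ∃ B : ℝ, ∀ x ∈ Set.Ici (0:ℝ), |g x| ≤ B)
    (h0 : g 0 = v) :
    Tendsto (fun h : ℝ => ∫ y in Ioi (0:ℝ),
        stdNormalPDF y / (1 + c * stdNormalCDF (-y)) * g (h * y))
      (nhdsWithin 0 (Set.Ioi 0))
      (nhds (v * (c⁻¹ * Real.log (1 + c / 2)))) := by
  have hc0 : (0:ℝ) < c := lt_of_lt_of_le one_pos hc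
  obtain ⟨B, hB⟩ := hbdd
  have hlim_eq : v * (c⁻¹ * Real.log (1 + c / 2)) =
      ∫ y in Ioi (0:ℝ), stdNormalPDF y / (1 + c * stdNormalCDF (-y)) * v := by
    rw [MeasureTheory.integral_mul_const, key_integral hc]; ring
  rw [hlim_eq]
  have hDcont : Continuous (fun y : ℝ => 1 + c * stdNormalCDF (-y)) :=
    continuous_const.add (continuous_const.mul
      (continuous_iff_continuousAt.2 fun y => (cdf_neg_hasDerivAt y).continuousAt))
  have hD : ∀ y : ℝ, 1 + c * stdNormalCDF (-y) ≠ 0 := fun y =>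
    ne_of_gt (lt_of_lt_of_le one_pos (denom_ge_one hc0.le y))
  have hkercont : Continuous (fun y : ℝ => stdNormalPDF y / (1 + c * stdNormalCDF (-y))) :=
    pdf_cont.div hDcont hD
  have hker_nonneg : ∀ y : ℝ, 0 ≤ stdNormalPDF y / (1 + c * stdNormalCDF (-y)) :=
    fun y => le_of_lt (div_pos (pdf_pos y) (lt_of_lt_of_le one_pos (denom_ge_one hc0.le y)))
  have hker_le : ∀ y : ℝ, stdNormalPDF y / (1 + c * stdNormalCDF (-y)) ≤ stdNormalPDF y :=
    fun y => div_le_self (pdf_pos y).le (denom_ge_one hc0.le y)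
  have hB0 : 0 ≤ B := le_trans (abs_nonneg _) (hB 0 Set.self_mem_Ici)
  apply MeasureTheory.tendsto_integral_filter_of_dominated_convergence
    (fun y => stdNormalPDF y * B)
  · filter_upwards [self_mem_nhdsWithin] with h (hh : (0:ℝ) < h)
    apply ContinuousOn.aestronglyMeasurable _ measurableSet_Ioi
    apply ContinuousOn.mul hkercont.continuousOn
    apply hcont.comp (continuous_const.mul continuous_id).continuousOn
    intro y hy
    exact le_of_lt (mul_pos hh hy)
  · filter_upwards [self_mem_nhdsWithin] with h (hh : (0:ℝ) < h)
    rw [MeasureTheory.ae_restrict_iff' measurableSet_Ioi]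
    filter_upwards with y hy
    rw [Real.norm_eq_abs, abs_mul, abs_of_nonneg (hker_nonneg y)]
    have h1 : |g (h * y)| ≤ B := hB _ (le_of_lt (mul_pos hh hy))
    calc stdNormalPDF y / (1 + c * stdNormalCDF (-y)) * |g (h * y)|
        ≤ stdNormalPDF y * |g (h * y)| := by
          apply mul_le_mul_of_nonneg_right (hker_le y) (abs_nonneg _)
      _ ≤ stdNormalPDF y * B := by
          apply mul_le_mul_of_nonneg_left h1 (pdf_pos y).le
  · exact (pdf_integrable.mul_const B).restrict
  · rw [MeasureTheory.ae_restrict_iff' measurableSet_Ioi]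
    filter_upwards with y hy
    have hmul : Tendsto (fun h : ℝ => h * y) (nhdsWithin 0 (Set.Ioi 0))
        (nhdsWithin 0 (Set.Ici 0)) := by
      apply tendsto_nhdsWithin_of_tendsto_nhds_of_eventually_within
      · have : Tendsto (fun h : ℝ => h * y) (nhds 0) (nhds 0) := by
          have := (continuous_mul_right y).tendsto 0
          simpa using this
        exact this.mono_left nhdsWithin_le_nhds
      · filter_upwards [self_mem_nhdsWithin] with h (hh : (0:ℝ) < h)
        exact le_of_lt (mul_pos hh hy)
    have hg : Tendsto (fun h : ℝ => g (h * y)) (nhdsWithin 0 (Set.Ioi 0)) (nhds v) := by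
      have := (hcont 0 Set.self_mem_Ici).tendsto.comp hmul
      rwa [h0] at this
    exact (hg.const_mul _)

/-- paper's Example 4.1. For bounded continuous densities
`f₁, …, f_k` on the `k` legs of the `k`-spider agreeing at the origin with value `v`,
the Gaussian-type kernel-smoothed density at the origin converges, as the bandwidth
`h → 0⁺`, to `v · (k/(k−2)) · log(k/2)`, exhibiting the boundary bias. -/
theorem stmt9 (k : ℕ) (hk : 3 ≤ k) (v : ℝ) (f : Fin k → ℝ → ℝ)
    (hcont : ∀ l, ContinuousOn (f l) (Set.Ici 0))
    (hbdd : ∀ l, ∃ B : ℝ, ∀ x ∈ Set.Ici (0 : ℝ), |f l x| ≤ B)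
    (h0 : ∀ l, f l 0 = v) :
    Filter.Tendsto
      (fun h : ℝ => ∑ l : Fin k, ∫ y in Set.Ioi (0 : ℝ),
        stdNormalPDF y / (1 + ((k : ℝ) - 2) * stdNormalCDF (-y)) * f l (h * y))
      (nhdsWithin 0 (Set.Ioi 0))
      (nhds (v * ((k : ℝ) / ((k : ℝ) - 2)) * Real.log ((k : ℝ) / 2))) := by
  have hk3 : (3:ℝ) ≤ (k:ℝ) := by exact_mod_cast hk
  have hc : (1:ℝ) ≤ (k:ℝ) - 2 := by linarith
  have hc0 : ((k:ℝ) - 2) ≠ 0 := by linarith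
  have harg : 1 + ((k:ℝ) - 2) / 2 = (k:ℝ) / 2 := by ring
  have hone : Tendsto
      (fun h : ℝ => ∑ l : Fin k, ∫ y in Set.Ioi (0 : ℝ),
        stdNormalPDF y / (1 + ((k : ℝ) - 2) * stdNormalCDF (-y)) * f l (h * y))
      (nhdsWithin 0 (Set.Ioi 0))
      (nhds (∑ _l : Fin k, v * (((k:ℝ) - 2)⁻¹ * Real.log (1 + ((k:ℝ) - 2) / 2)))) := by
    apply tendsto_finset_sum
    intro l _
    exact leg_tendsto hc v (f l) (hcont l) (hbdd l) (h0 l)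
  convert hone using 2
  rw [Finset.sum_const, Finset.card_univ, Fintype.card_fin, nsmul_eq_mul, harg]
  field_simp
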